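/- Let Ψ = φ_1 ◁ ⋯ ◁ φ_k be an atomic preference and let α, β be trajectories. Then α ≺_Ψ β if and only if w_Ψ(α) > w_Ψ(β), and α ≈_Ψ β if and only if w_Ψ(α) = w_Ψ(β). -/

import Mathlib

/-- `α ≈_Ψ β` for an atomic preference `Ψ = φ_1 ◁ ⋯ ◁ φ_k`. -/
def AtomicPref.indist {T : Type} {k : ℕ} (φ : Fin k → T → Prop) (α β : T) : Prop :=
  ∀ i : Fin k, φ i α ↔ φ i β

/-- `α ≺_Ψ β` for an atomic preference `Ψ = φ_1 ◁ ⋯ ◁ φ_k`. -/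
def AtomicPref.prec {T : Type} {k : ℕ} (φ : Fin k → T → Prop) (α β : T) : Prop :=
  ∃ i : Fin k, (φ i α ∧ ¬ φ i β) ∧ ∀ j : Fin k, j < i → (φ j α ↔ φ j β)

open Classical in
/-- The weight of a trajectory w.r.t. a basic desire `φ`: 1 if satisfied, 0 otherwise. -/
noncomputable def basicWeight {T : Type} (φ : T → Prop) (α : T) : ℕ :=
  if φ α then 1 else 0

/-- The weight of a trajectory `α` w.r.t. an atomic preference `Ψ = φ_1 ◁ ⋯ ◁ φ_k`:
`w_Ψ(α) = Σ_{r=1}^{k} 2^{k−r} · w_{φ_r}(α)` (index `i : Fin k` corresponds to `r = i+1`). -/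
noncomputable def atomicWeight {T : Type} {k : ℕ} (φ : Fin k → T → Prop) (α : T) : ℕ :=
  ∑ i : Fin k, 2 ^ (k - (i.val + 1)) * basicWeight (φ i) α

/-- Let `Ψ = φ_1 ◁ ⋯ ◁ φ_k` be an atomic preference. Then `α ≺_Ψ β` iff
`w_Ψ(α) > w_Ψ(β)`, and `α ≈_Ψ β` iff `w_Ψ(α) = w_Ψ(β)`. -/
lemma basicWeight_le_one {T : Type} (φ : T → Prop) (α : T) : basicWeight φ α ≤ 1 := by
  unfold basicWeight; split <;> omega

lemma basicWeight_eq_iff {T : Type} (φ : T → Prop) (α β : T) :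
    basicWeight φ α = basicWeight φ β ↔ (φ α ↔ φ β) := by
  unfold basicWeight
  by_cases hα : φ α <;> by_cases hβ : φ β <;> simp [hα, hβ]

lemma basicWeight_one_zero {T : Type} (φ : T → Prop) (α β : T) :
    (basicWeight φ α = 1 ∧ basicWeight φ β = 0) ↔ (φ α ∧ ¬ φ β) := by
  unfold basicWeight
  by_cases hα : φ α <;> by_cases hβ : φ β <;> simp [hα, hβ]

lemma atomicWeight_succ {T : Type} {k : ℕ} (φ : Fin (k + 1) → T → Prop) (α : T) :
    atomicWeight φ α = 2 ^ k * basicWeight (φ 0) α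
      + atomicWeight (fun i : Fin k => φ i.succ) α := by
  unfold atomicWeight
  rw [Fin.sum_univ_succ]
  simp only [Fin.val_zero, Fin.val_succ, zero_add, Nat.add_sub_cancel]
  congr 1
  apply Finset.sum_congr rfl
  intro i _
  congr 2
  omega

lemma lex_key (p a b x y : ℕ) (hp : 0 < p) (ha : a ≤ 1) (hb : b ≤ 1)
    (hx : x < p) (hy : y < p) :
    (p * a + x > p * b + y ↔ ((a = 1 ∧ b = 0) ∨ (a = b ∧ x > y))) ∧
    (p * a + x = p * b + y ↔ (a = b ∧ x = y)) := by
  interval_cases a <;> interval_cases b <;> omega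

lemma atomicWeight_lt {T : Type} {k : ℕ} (φ : Fin k → T → Prop) (α : T) :
    atomicWeight φ α < 2 ^ k := by
  induction k with
  | zero => simp [atomicWeight]
  | succ n ih =>
    rw [atomicWeight_succ]
    have h1 := ih (fun i => φ i.succ)
    have h2 := basicWeight_le_one (φ 0) α
    have h3 : (2:ℕ) ^ (n + 1) = 2 * 2 ^ n := by ring
    nlinarith

theorem atomicWeight_characterization {T : Type} {k : ℕ} (φ : Fin k → T → Prop)
    (α β : T) :
    (AtomicPref.prec φ α β ↔ atomicWeight φ α > atomicWeight φ β) ∧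
    (AtomicPref.indist φ α β ↔ atomicWeight φ α = atomicWeight φ β) := by
  induction k with
  | zero =>
    constructor
    · simp [AtomicPref.prec, atomicWeight]
    · simp [AtomicPref.indist, atomicWeight]
  | succ n ih =>
    obtain ⟨ihp, ihe⟩ := ih (fun i : Fin n => φ i.succ)
    set a := basicWeight (φ 0) α with ha_def
    set b := basicWeight (φ 0) β with hb_def
    set x := atomicWeight (fun i : Fin n => φ i.succ) α with hx_def
    set y := atomicWeight (fun i : Fin n => φ i.succ) β with hy_def
    have ha : a ≤ 1 := basicWeight_le_one _ _
    have hb : b ≤ 1 := basicWeight_le_one _ _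
    have hx : x < 2 ^ n := atomicWeight_lt _ _
    have hy : y < 2 ^ n := atomicWeight_lt _ _
    have hp : 0 < (2:ℕ) ^ n := Nat.pow_pos (by norm_num)
    have hsα : atomicWeight φ α = 2 ^ n * a + x := atomicWeight_succ φ α
    have hsβ : atomicWeight φ β = 2 ^ n * b + y := atomicWeight_succ φ β
    obtain ⟨hkey1, hkey2⟩ := lex_key (2 ^ n) a b x y hp ha hb hx hy
    constructor
    · constructor
      · rintro ⟨i, ⟨h1, h2⟩, h3⟩
        rw [hsα, hsβ]
        induction i using Fin.cases with
        | zero =>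
          have hab : a = 1 ∧ b = 0 := (basicWeight_one_zero (φ 0) α β).mpr ⟨h1, h2⟩
          exact hkey1.mpr (Or.inl hab)
        | succ j =>
          have h0 : a = b := (basicWeight_eq_iff (φ 0) α β).mpr (h3 0 (Fin.succ_pos j))
          have htail : AtomicPref.prec (fun i : Fin n => φ i.succ) α β := by
            refine ⟨j, ⟨h1, h2⟩, fun j' hj' => ?_⟩
            exact h3 j'.succ (Fin.succ_lt_succ_iff.mpr hj')
          have hxy : x > y := ihp.mp htail
          exact hkey1.mpr (Or.inr ⟨h0, hxy⟩)
      · intro hgt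
        rw [hsα, hsβ] at hgt
        have hcases : (a = 1 ∧ b = 0) ∨ (a = b ∧ x > y) := hkey1.mp hgt
        rcases hcases with ⟨ha1, hb0⟩ | ⟨hab, hxy⟩
        · obtain ⟨h1, h2⟩ := (basicWeight_one_zero (φ 0) α β).mp ⟨ha1, hb0⟩
          exact ⟨0, ⟨h1, h2⟩, fun j hj => absurd hj (Fin.not_lt_zero j)⟩
        · have h0 : φ 0 α ↔ φ 0 β := (basicWeight_eq_iff (φ 0) α β).mp hab
          obtain ⟨i, ⟨h1, h2⟩, h3⟩ := ihp.mpr hxy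
          refine ⟨i.succ, ⟨h1, h2⟩, fun j hj => ?_⟩
          induction j using Fin.cases with
          | zero => exact h0
          | succ j' => exact h3 j' (Fin.succ_lt_succ_iff.mp hj)
    · constructor
      · intro h
        have h0 : a = b := (basicWeight_eq_iff (φ 0) α β).mpr (h 0)
        have hxy : x = y := ihe.mp (fun i => h i.succ)
        rw [hsα, hsβ, h0, hxy]
      · intro heq
        rw [hsα, hsβ] at heq
        have hcases : a = b ∧ x = y := hkey2.mp heq
        intro i
        induction i using Fin.cases with
        | zero => exact (basicWeight_eq_iff (φ 0) α β).mp hcases.1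
        | succ j => exact ihe.mpr hcases.2 j
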